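/- Over a ring R that is a finite direct product of local rings, every cu-uniserial left R-module is uniserial. -/

import Mathlib

/-- The radical of a module: intersection of all maximal submodules. -/
def ModRadical (R M : Type*) [Ring R] [AddCommGroup M] [Module R M] : Submodule R M :=
  sInf {N : Submodule R M | IsCoatom N}

/-- A module is cyclic if it is generated by one element. -/
def IsCyclicMod (R M : Type*) [Ring R] [AddCommGroup M] [Module R M] : Prop :=
  ∃ x : M, Submodule.span R {x} = ⊤

/-- A module is uniform if it is nonzero and any two nonzero submodules intersect nontrivially. -/
def IsUniformMod (R M : Type*) [Ring R] [AddCommGroup M] [Module R M] : Prop :=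
  Nontrivial M ∧ ∀ A B : Submodule R M, A ≠ ⊥ → B ≠ ⊥ → A ⊓ B ≠ ⊥

/-- A module is cyclic-uniform uniserial (cu-uniserial) if it is nonzero and for every
nonzero finitely generated submodule `K`, the quotient `K / Rad K` is cyclic and uniform. -/
def IsCUUniserial (R M : Type*) [Ring R] [AddCommGroup M] [Module R M] : Prop :=
  Nontrivial M ∧ ∀ K : Submodule R M, K ≠ ⊥ → K.FG →
    IsCyclicMod R (↥K ⧸ ModRadical R ↥K) ∧ IsUniformMod R (↥K ⧸ ModRadical R ↥K)

section Aux

variable {ι : Type*} [Fintype ι] [DecidableEq ι] {S : ι → Type*} [∀ i, Ring (S i)]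

lemma single_mul_aux (i : ι) (t : S i) (u : ∀ j, S j) :
    (Pi.single i t : ∀ j, S j) * u = Pi.single i (t * u i) := by
  funext k
  rcases eq_or_ne k i with rfl | hk
  · simp
  · simp [Pi.single_eq_of_ne hk]

lemma mul_single_aux (i : ι) (t : S i) (u : ∀ j, S j) :
    u * (Pi.single i t : ∀ j, S j) = Pi.single i (u i * t) := by
  funext k
  rcases eq_or_ne k i with rfl | hk
  · simp
  · simp [Pi.single_eq_of_ne hk]

lemma single_central (i : ι) (u : ∀ j, S j) :
    (Pi.single i 1 : ∀ j, S j) * u = u * Pi.single i 1 := by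
  rw [single_mul_aux, mul_single_aux, one_mul, mul_one]

/-- A cyclic uniform module over a finite product of local rings has a largest
proper submodule. -/
lemma local_of_cyclic_uniform (hloc : ∀ i, ∃! I : Ideal (S i), IsCoatom I)
    {Q : Type*} [AddCommGroup Q] [Module (∀ i, S i) Q]
    (hc : IsCyclicMod (∀ i, S i) Q) (hu : IsUniformMod (∀ i, S i) Q) :
    ∃ C : Submodule (∀ i, S i) Q, C ≠ ⊤ ∧
      ∀ N : Submodule (∀ i, S i) Q, N ≠ ⊤ → N ≤ C := by
  obtain ⟨q, hq⟩ := hc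
  obtain ⟨hnt, hu⟩ := hu
  set e : ι → (∀ i, S i) := fun j => Pi.single j 1 with he
  -- idempotent facts
  have he_mul : ∀ j, e j * e j = e j := by
    intro j; rw [single_mul_aux]; simp [he]
  have he_orth : ∀ j k, j ≠ k → e j * e k = 0 := by
    intro j k hjk
    rw [single_mul_aux]
    simp [he, Pi.single_eq_of_ne hjk]
  -- the submodules e j • Q
  set E : ι → Submodule (∀ i, S i) Q := fun j =>
    { carrier := {z | e j • z = z}
      add_mem' := fun ha hb => by simp only [Set.mem_setOf_eq, smul_add] at *; rw [ha, hb]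
      zero_mem' := by simp
      smul_mem' := fun r z hz => by
        simp only [Set.mem_setOf_eq] at *
        rw [← mul_smul, single_central, mul_smul, hz] } with hE
  have hsum : ∀ z : Q, ∑ j, e j • z = z := by
    intro z
    rw [← Finset.sum_smul]
    have : (∑ j, e j) = (1 : (∀ i, S i)) := by
      have := Finset.univ_sum_single (1 : (∀ i, S i))
      simpa [he] using this
    rw [this, one_smul]
  have hmemE : ∀ j (z : Q), e j • z ∈ E j := by
    intro j z
    show e j • (e j • z) = e j • z
    rw [← mul_smul, he_mul]
  -- exactly one index has E i ≠ ⊥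
  have hex : ∃ i, E i ≠ ⊥ := by
    by_contra hcon
    push_neg at hcon
    obtain ⟨a, b, hab⟩ := hnt
    have hz : ∀ z : Q, z = 0 := by
      intro z
      have : ∀ j, e j • z = 0 := fun j => by
        have := hmemE j z
        rw [hcon j] at this
        simpa using this
      have := hsum z
      simp only [this] at *
      rw [← hsum z]
      simp [‹∀ j, e j • z = 0›]
    exact hab ((hz a).trans (hz b).symm)
  obtain ⟨i, hEi⟩ := hex
  have hEuniq : ∀ j, j ≠ i → E j = ⊥ := by
    intro j hj
    by_contra hEj
    apply hu (E j) (E i) hEj hEi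
    ext z
    simp only [Submodule.mem_inf, Submodule.mem_bot]
    constructor
    · rintro ⟨h1, h2⟩
      have h1' : e j • z = z := h1
      have h2' : e i • z = z := h2
      calc z = e j • z := h1'.symm
        _ = e j • (e i • z) := by rw [h2']
        _ = (e j * e i) • z := (mul_smul _ _ _).symm
        _ = 0 := by rw [he_orth j i hj, zero_smul]
    · rintro rfl; exact ⟨(E j).zero_mem, (E i).zero_mem⟩
  have hfix : ∀ z : Q, e i • z = z := by
    intro z
    have := hsum z
    rw [Finset.sum_eq_single i] at this
    · exact this
    · intro j _ hj
      have := hmemE j z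
      rw [hEuniq j hj] at this
      simpa using this
    · intro hi; exact absurd (Finset.mem_univ i) hi
  have hq0 : q ≠ 0 := by
    rintro rfl
    obtain ⟨a, b, hab⟩ := hnt
    apply hab
    have ha : a ∈ Submodule.span (∀ i, S i) {(0 : Q)} := hq ▸ Submodule.mem_top
    have hb : b ∈ Submodule.span (∀ i, S i) {(0 : Q)} := hq ▸ Submodule.mem_top
    rw [Submodule.span_zero_singleton, Submodule.mem_bot] at ha hb
    rw [ha, hb]
  obtain ⟨m, hm, hmuniq⟩ := hloc i
  -- non-elements of m are left-invertible
  have hunit : ∀ s : S i, s ∉ m → ∃ t : S i, t * s = 1 := by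
    intro s hs
    have hspan : Submodule.span (S i) {s} = ⊤ := by
      by_contra hne
      obtain ⟨P, hP, hsP⟩ := Ideal.exists_le_maximal _ hne
      have : P = m := hmuniq P hP.out
      exact hs (this ▸ hsP (Submodule.mem_span_singleton_self s))
    have : (1 : S i) ∈ Submodule.span (S i) {s} := hspan ▸ Submodule.mem_top
    obtain ⟨t, ht⟩ := Submodule.mem_span_singleton.mp this
    exact ⟨t, by simpa using ht⟩
  -- the ideal J of (∀ i, S i)
  set J : Submodule (∀ i, S i) (∀ i, S i) :=
    { carrier := {r : (∀ i, S i) | r i ∈ m}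
      add_mem' := fun ha hb => by
        simp only [Set.mem_setOf_eq, Pi.add_apply] at *
        exact m.add_mem ha hb
      zero_mem' := by simp only [Set.mem_setOf_eq, Pi.zero_apply]; exact m.zero_mem
      smul_mem' := fun r s hs => by
        simp only [Set.mem_setOf_eq, smul_eq_mul, Pi.mul_apply] at *
        exact m.smul_mem (r i) hs } with hJ
  refine ⟨Submodule.map (LinearMap.toSpanSingleton (∀ i, S i) Q q) J, ?_, ?_⟩
  · -- C ≠ ⊤
    intro htop
    have hqC : q ∈ Submodule.map (LinearMap.toSpanSingleton (∀ i, S i) Q q) J :=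
      htop ▸ Submodule.mem_top
    obtain ⟨r, hrJ, hrq⟩ := hqC
    rw [LinearMap.toSpanSingleton_apply] at hrq
    have hri : r i ∈ m := hrJ
    have h1r : (1 : (∀ i, S i)) - r ∈ (⊤ : Submodule (∀ i, S i) (∀ i, S i)) := Submodule.mem_top
    have h1ri : (1 - r) i ∉ m := by
      intro hmem
      simp only [Pi.sub_apply, Pi.one_apply] at hmem
      have : (1 : S i) ∈ m := by
        have := m.add_mem hmem hri
        simpa using this
      exact hm.1 ((Ideal.eq_top_iff_one m).mpr this)
    obtain ⟨t, ht⟩ := hunit _ h1ri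
    have hzero : ((1 : (∀ i, S i)) - r) • q = 0 := by
      rw [sub_smul, one_smul, hrq, sub_self]
    have : q = 0 := by
      calc q = e i • q := (hfix q).symm
        _ = (Pi.single i (t * ((1 : (∀ i, S i)) - r) i) : (∀ i, S i)) • q := by rw [ht]
        _ = ((Pi.single i t : (∀ i, S i)) * ((1 : (∀ i, S i)) - r)) • q := by rw [single_mul_aux]
        _ = (Pi.single i t : (∀ i, S i)) • (((1 : (∀ i, S i)) - r) • q) := by rw [mul_smul]
        _ = 0 := by rw [hzero, smul_zero]
    exact hq0 this
  · -- every proper submodule is ≤ C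
    intro N hN z hz
    have hzspan : z ∈ Submodule.span (∀ i, S i) {q} := hq ▸ Submodule.mem_top
    obtain ⟨r, hr⟩ := Submodule.mem_span_singleton.mp hzspan
    by_cases hri : r i ∈ m
    · exact ⟨r, hri, by rw [LinearMap.toSpanSingleton_apply, hr]⟩
    · exfalso
      obtain ⟨t, ht⟩ := hunit _ hri
      have hqN : q ∈ N := by
        have : q = (Pi.single i t : (∀ i, S i)) • z := by
          calc q = e i • q := (hfix q).symm
            _ = (Pi.single i (t * r i) : (∀ i, S i)) • q := by rw [ht]
            _ = ((Pi.single i t : (∀ i, S i)) * r) • q := by rw [single_mul_aux]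
            _ = (Pi.single i t : (∀ i, S i)) • (r • q) := by rw [mul_smul]
            _ = (Pi.single i t : (∀ i, S i)) • z := by rw [hr]
        rw [this]
        exact N.smul_mem _ hz
      apply hN
      rw [eq_top_iff, ← hq, Submodule.span_le, Set.singleton_subset_iff]
      exact hqN

end Aux

theorem stmt18 {ι : Type*} [Fintype ι] (S : ι → Type*) [∀ i, Ring (S i)]
    (hloc : ∀ i, ∃! I : Ideal (S i), IsCoatom I)
    {M : Type*} [AddCommGroup M] [Module (∀ i, S i) M]
    (h : IsCUUniserial (∀ i, S i) M) :
    ∀ A B : Submodule (∀ i, S i) M, A ≤ B ∨ B ≤ A := by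
  classical
  obtain ⟨hMnt, hcu⟩ := h
  have key : ∀ x y : M, Submodule.span (∀ i, S i) {x} ≤ Submodule.span (∀ i, S i) {y} ∨
      Submodule.span (∀ i, S i) {y} ≤ Submodule.span (∀ i, S i) {x} := by
    intro x y
    rcases eq_or_ne x 0 with rfl | hx
    · left; rw [Submodule.span_zero_singleton]; exact bot_le
    rcases eq_or_ne y 0 with rfl | hy
    · right; rw [Submodule.span_zero_singleton]; exact bot_le
    set K : Submodule (∀ i, S i) M := Submodule.span (∀ i, S i) {x, y} with hK
    have hxK : x ∈ K := Submodule.subset_span (by simp)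
    have hyK : y ∈ K := Submodule.subset_span (by simp)
    have hKbot : K ≠ ⊥ := by
      intro hb
      rw [hb, Submodule.mem_bot] at hxK
      exact hx hxK
    have hKfg : K.FG := by
      apply Submodule.fg_span
      exact (Set.finite_singleton y).insert x
    obtain ⟨hcyc, hunif⟩ := hcu K hKbot hKfg
    obtain ⟨C, hCne, hCmax⟩ := local_of_cyclic_uniform hloc hcyc hunif
    haveI : Module.Finite (∀ i, S i) ↥K := ⟨(Submodule.fg_top K).mpr hKfg⟩
    -- radical is superfluous in the finitely generated module K
    have hsup : ∀ N : Submodule (∀ i, S i) ↥K, (ModRadical (∀ i, S i) ↥K) ⊔ N = ⊤ → N = ⊤ := by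
      intro N hN
      by_contra hne
      haveI : IsCoatomic (Submodule (∀ i, S i) ↥K) :=
        CompleteLattice.coatomic_of_top_compact
          ((Submodule.fg_iff_compact _).mp ((Submodule.fg_top K).mpr hKfg))
      obtain ⟨P, hP, hNP⟩ := (eq_top_or_exists_le_coatom N).resolve_left hne
      have hradP : (ModRadical (∀ i, S i) ↥K) ≤ P := sInf_le hP
      have htop : (⊤ : Submodule (∀ i, S i) ↥K) ≤ P := hN ▸ sup_le hradP hNP
      exact hP.1 (top_le_iff.mp htop)
    set x' : ↥K := ⟨x, hxK⟩ with hx'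
    set y' : ↥K := ⟨y, hyK⟩ with hy'
    have hsub : Function.Injective K.subtype := Subtype.coe_injective
    have hmapx : Submodule.map K.subtype (Submodule.span (∀ i, S i) {x'}) = Submodule.span (∀ i, S i) {x} := by
      rw [Submodule.map_span]; congr 1; simp; rfl
    have hmapy : Submodule.map K.subtype (Submodule.span (∀ i, S i) {y'}) = Submodule.span (∀ i, S i) {y} := by
      rw [Submodule.map_span]; congr 1; simp; rfl
    have hspan_top : Submodule.span (∀ i, S i) {x', y'} = ⊤ := by
      apply Submodule.map_injective_of_injective hsub
      rw [Submodule.map_span, Submodule.map_top, Submodule.range_subtype]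
      have himg : K.subtype '' {x', y'} = {x, y} := by
        rw [Set.image_pair]; rfl
      rw [himg, ← hK]
    have hone : Submodule.map (ModRadical (∀ i, S i) ↥K).mkQ (Submodule.span (∀ i, S i) {x'}) = ⊤ ∨
        Submodule.map (ModRadical (∀ i, S i) ↥K).mkQ (Submodule.span (∀ i, S i) {y'}) = ⊤ := by
      by_contra hcon
      push_neg at hcon
      have h1 := hCmax _ hcon.1
      have h2 := hCmax _ hcon.2
      have hle : Submodule.map (ModRadical (∀ i, S i) ↥K).mkQ (⊤ : Submodule (∀ i, S i) ↥K) ≤ C := by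
        rw [← hspan_top]
        have : ({x', y'} : Set ↥K) = insert x' {y'} := rfl
        rw [this, Submodule.span_insert, Submodule.map_sup]
        exact sup_le h1 h2
      rw [Submodule.map_top, Submodule.range_mkQ] at hle
      exact hCne (top_le_iff.mp hle)
    rcases hone with hone | hone
    · right
      have : (ModRadical (∀ i, S i) ↥K) ⊔ Submodule.span (∀ i, S i) {x'} = ⊤ := (Submodule.map_mkQ_eq_top _ _).mp hone
      have hxtop : Submodule.span (∀ i, S i) {x'} = ⊤ := hsup _ this
      have : y ∈ Submodule.span (∀ i, S i) {x} := by
        rw [← hmapx, hxtop]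
        exact ⟨y', Submodule.mem_top, rfl⟩
      rwa [Submodule.span_le, Set.singleton_subset_iff]
    · left
      have : (ModRadical (∀ i, S i) ↥K) ⊔ Submodule.span (∀ i, S i) {y'} = ⊤ := (Submodule.map_mkQ_eq_top _ _).mp hone
      have hytop : Submodule.span (∀ i, S i) {y'} = ⊤ := hsup _ this
      have : x ∈ Submodule.span (∀ i, S i) {y} := by
        rw [← hmapy, hytop]
        exact ⟨x', Submodule.mem_top, rfl⟩
      rwa [Submodule.span_le, Set.singleton_subset_iff]
  intro A B
  by_cases hAB : A ≤ B
  · left; exact hAB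
  · right
    obtain ⟨a, haA, haB⟩ := SetLike.not_le_iff_exists.mp hAB
    intro b hbB
    rcases key a b with hab | hab
    · exact absurd (hab (Submodule.mem_span_singleton_self a))
        (fun hm => haB ((Submodule.span_le.mpr (Set.singleton_subset_iff.mpr hbB)) hm))
    · exact (Submodule.span_le.mpr (Set.singleton_subset_iff.mpr haA))
        (hab (Submodule.mem_span_singleton_self b))
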